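/- For each natural n ≥ 1, the 4×4 matrix M(n) with rows (1,1,1,1), (n,n+1,0,0), (0,0,2,1), (n+1,n+2,2,2) has characteristic polynomial factoring as (x² - a⁺_n x + 1)(x² - a⁻_n x + 1) where a^±_n = (n + 6 ± √(n² + 4))/2; equivalently, its four eigenvalues are ρ = (a^±_n ± √((a^±_n)² - 4))/2. -/

import Mathlib

open Polynomial

set_option maxHeartbeats 2000000 in
theorem stmt10 (n : ℕ) (hn : 1 ≤ n) :
    (Matrix.charpoly
        (!![1, 1, 1, 1;
            (n : ℝ), (n : ℝ) + 1, 0, 0;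
            0, 0, 2, 1;
            (n : ℝ) + 1, (n : ℝ) + 2, 2, 2])) =
      (X ^ 2 - C (((n : ℝ) + 6 + Real.sqrt ((n : ℝ) ^ 2 + 4)) / 2) * X + 1) *
        (X ^ 2 - C (((n : ℝ) + 6 - Real.sqrt ((n : ℝ) ^ 2 + 4)) / 2) * X + 1) := by
  have hs : Real.sqrt ((n:ℝ)^2+4) * Real.sqrt ((n:ℝ)^2+4) = (n:ℝ)^2 + 4 :=
    Real.mul_self_sqrt (by positivity)
  have hsum : ((n : ℝ) + 6 + Real.sqrt ((n : ℝ) ^ 2 + 4)) / 2 +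
      ((n : ℝ) + 6 - Real.sqrt ((n : ℝ) ^ 2 + 4)) / 2 = (n:ℝ) + 6 := by ring
  have hprod : (((n : ℝ) + 6 + Real.sqrt ((n : ℝ) ^ 2 + 4)) / 2) *
      (((n : ℝ) + 6 - Real.sqrt ((n : ℝ) ^ 2 + 4)) / 2) = 3*(n:ℝ) + 8 := by
    linear_combination (-1/4) * hs
  have e1 : C (((n : ℝ) + 6 + Real.sqrt ((n : ℝ) ^ 2 + 4)) / 2) +
      C (((n : ℝ) + 6 - Real.sqrt ((n : ℝ) ^ 2 + 4)) / 2) = C ((n:ℝ) + 6) := by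
    rw [← C_add, hsum]
  have e2 : C (((n : ℝ) + 6 + Real.sqrt ((n : ℝ) ^ 2 + 4)) / 2) *
      C (((n : ℝ) + 6 - Real.sqrt ((n : ℝ) ^ 2 + 4)) / 2) = C (3*(n:ℝ) + 8) := by
    rw [← C_mul, hprod]
  have key : (X ^ 2 - C (((n : ℝ) + 6 + Real.sqrt ((n : ℝ) ^ 2 + 4)) / 2) * X + 1) *
        (X ^ 2 - C (((n : ℝ) + 6 - Real.sqrt ((n : ℝ) ^ 2 + 4)) / 2) * X + 1) =
      X^4 - C ((n:ℝ) + 6) * X^3 + (C (3*(n:ℝ) + 8) + 2) * X^2 - C ((n:ℝ) + 6) * X + 1 := by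
    rw [← e1, ← e2]; ring
  rw [key]
  have hc : (!![1, 1, 1, 1;
            (n : ℝ), (n : ℝ) + 1, 0, 0;
            0, 0, 2, 1;
            (n : ℝ) + 1, (n : ℝ) + 2, 2, 2]).charmatrix
      = !![X - 1, -1, -1, -1;
           -C (n:ℝ), X - C ((n:ℝ)+1), 0, 0;
           0, 0, X - 2, -1;
           -C ((n:ℝ)+1), -C ((n:ℝ)+2), -2, X - 2] := by
    ext i j
    fin_cases i <;> fin_cases j <;>
      simp [Matrix.charmatrix_apply, Matrix.one_apply, map_ofNat, Matrix.vecHead, Matrix.vecTail] <;> ring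
  rw [Matrix.charpoly, hc, Matrix.det_succ_row_zero]
  simp [Fin.sum_univ_succ, Matrix.det_fin_three, Matrix.submatrix, Fin.succAbove, Fin.castSucc,
    Fin.castAdd, Fin.castLE, map_add, map_mul, map_ofNat]
  push_cast
  ring
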